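/- Let n ≥ 1. Let a, b : ℝ² → ℝⁿ and L, N : ℝ² → ℝ^{n×n} be continuously differentiable, define F(z,x,t) = a(x,t) + L(x,t) z and G(z,x,t) = b(x,t) + N(x,t) z, set M(x,t) = L(x,t)ᵀ − L(x,t) and K(x,t) = N(x,t)ᵀ − N(x,t), and let B : ℝⁿ × ℝ² → ℝ be twice continuously differentiable. Let z : ℝ² → ℝⁿ be any differentiable function. If U, V : ℝ² → ℝⁿ are differentiable solutions of the variational equation M W_t + K W_x = [∇²_z B(z(x,t),x,t) + (∂L/∂t)(x,t) + (∂N/∂x)(x,t)] W (with W = U and W = V respectively, ∇²_z B the Hessian of B in its z arguments), then ∂/∂t ⟨M U, V⟩ + ∂/∂x ⟨K U, V⟩ = 0 at every point of ℝ². -/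

import Mathlib

open Matrix

/-- Partial derivative of `f : ℝⁿ × ℝ² → ℝ` (arguments `(z, x, t)`) in the `μ`-th
component of its `z` argument, at the point `P`. -/
noncomputable def pderZ (n : ℕ) (f : (Fin n → ℝ) × ℝ × ℝ → ℝ) (μ : Fin n)
    (P : (Fin n → ℝ) × ℝ × ℝ) : ℝ :=
  deriv (fun s => f (Function.update P.1 μ s, P.2)) (P.1 μ)

/- auxiliary lemmas -/
lemma pderZ_eq_fderiv {n : ℕ} {f : (Fin n → ℝ) × ℝ × ℝ → ℝ} {Q : (Fin n → ℝ) × ℝ × ℝ}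
    {f' : ((Fin n → ℝ) × ℝ × ℝ) →L[ℝ] ℝ} (hf : HasFDerivAt f f' Q) (μ : Fin n) :
    pderZ n f μ Q = f' (Pi.single μ 1, 0) := by
  have hφ : HasDerivAt (fun s : ℝ => ((Function.update Q.1 μ s, Q.2) : (Fin n → ℝ) × ℝ × ℝ))
      ((Pi.single μ 1, 0) : (Fin n → ℝ) × ℝ × ℝ) (Q.1 μ) := by
    apply HasDerivAt.prodMk
    · rw [hasDerivAt_pi]
      intro i
      by_cases h : i = μ
      · subst h
        simpa [Function.update_apply] using hasDerivAt_id' (Q.1 i)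
      · simpa [Function.update_apply, h, Pi.single_apply] using
          hasDerivAt_const (Q.1 μ) (Q.1 i)
    · exact hasDerivAt_const _ _
  have hQ : ((Function.update Q.1 μ (Q.1 μ), Q.2) : (Fin n → ℝ) × ℝ × ℝ) = Q := by
    simp
  have h2 : HasFDerivAt f f' ((fun s : ℝ => ((Function.update Q.1 μ s, Q.2) :
      (Fin n → ℝ) × ℝ × ℝ)) (Q.1 μ)) := by simp only []; rwa [hQ]
  have := h2.comp_hasDerivAt (Q.1 μ) hφ
  exact this.deriv

lemma hess_symm {n : ℕ} {B : (Fin n → ℝ) × ℝ × ℝ → ℝ} (hB : ContDiff ℝ 2 B)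
    (P : (Fin n → ℝ) × ℝ × ℝ) (μ ν : Fin n) :
    pderZ n (fun Q => pderZ n B ν Q) μ P = pderZ n (fun Q => pderZ n B μ Q) ν P := by
  have hdiff : Differentiable ℝ B := hB.differentiable two_ne_zero
  have h1 : ∀ κ : Fin n, (fun Q => pderZ n B κ Q)
      = fun Q => fderiv ℝ B Q ((Pi.single κ 1, 0) : (Fin n → ℝ) × ℝ × ℝ) := by
    intro κ; funext Q
    exact pderZ_eq_fderiv (hdiff Q).hasFDerivAt κ
  have hfd : Differentiable ℝ (fderiv ℝ B) :=
    (hB.fderiv_right (by norm_num)).differentiable one_ne_zero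
  set f'' := fderiv ℝ (fderiv ℝ B) P with hf''def
  have hf'' : HasFDerivAt (fderiv ℝ B) f'' P := (hfd P).hasFDerivAt
  have key : ∀ (κ : Fin n) (w : (Fin n → ℝ) × ℝ × ℝ),
      pderZ n (fun Q => fderiv ℝ B Q w) κ P = f'' ((Pi.single κ 1, 0)) w := by
    intro κ w
    have hc := hf''.clm_apply (hasFDerivAt_const w P)
    simpa using pderZ_eq_fderiv hc κ
  have hsymm := second_derivative_symmetric (f' := fderiv ℝ B) (f'' := f'')
    (fun y => (hdiff y).hasFDerivAt) hf''
    ((Pi.single μ 1, 0) : (Fin n → ℝ) × ℝ × ℝ) ((Pi.single ν 1, 0))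
  rw [h1 ν, h1 μ, key μ, key ν, hsymm]

lemma hasDerivAt_quadform {n : ℕ} {A : ℝ → Matrix (Fin n) (Fin n) ℝ} {u v : ℝ → Fin n → ℝ}
    {A' : Matrix (Fin n) (Fin n) ℝ} {u' v' : Fin n → ℝ} {t : ℝ}
    (hA : ∀ μ ν, HasDerivAt (fun s => A s μ ν) (A' μ ν) t)
    (hu : ∀ i, HasDerivAt (fun s => u s i) (u' i) t)
    (hv : ∀ i, HasDerivAt (fun s => v s i) (v' i) t) :
    HasDerivAt (fun s => (A s *ᵥ u s) ⬝ᵥ v s)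
      ((A' *ᵥ u t) ⬝ᵥ v t + (A t *ᵥ u') ⬝ᵥ v t + (A t *ᵥ u t) ⬝ᵥ v') t := by
  have h : ∀ μ : Fin n, HasDerivAt (fun s => (∑ ν, A s μ ν * u s ν) * v s μ)
      ((∑ ν, (A' μ ν * u t ν + A t μ ν * u' ν)) * v t μ
        + (∑ ν, A t μ ν * u t ν) * v' μ) t := by
    intro μ
    exact (HasDerivAt.fun_sum fun ν _ => (hA μ ν).mul (hu ν)).mul (hv μ)
  have h2 := HasDerivAt.fun_sum (fun μ (_ : μ ∈ Finset.univ) => h μ)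
  convert h2 using 1
  · rfl
  · rfl
  all_goals simp [mulVec, dotProduct, Finset.sum_add_distrib, add_mul]

/-- For one-forms affine in `z`, `F(z,x,t) = a(x,t) + L(x,t)z`
and `G(z,x,t) = b(x,t) + N(x,t)z`, with `M = Lᵀ − L`, `K = Nᵀ − N` and a `C²`
Birkhoffian `B`, any two differentiable solutions `U, V` of the variational
equation `M W_t + K W_x = (∇²_z B(z(x,t),x,t) + L_t + N_x) W` along a
differentiable field `z` satisfy the multi-symplectic dissipation law
`∂_t ⟨M U, V⟩ + ∂_x ⟨K U, V⟩ = 0` at every point. -/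
theorem affine_birkhoff_dissipation_law (n : ℕ) (hn : 1 ≤ n)
    (a b : ℝ → ℝ → Fin n → ℝ) (L N : ℝ → ℝ → Matrix (Fin n) (Fin n) ℝ)
    (ha : ContDiff ℝ 1 (fun P : ℝ × ℝ => a P.1 P.2))
    (hb : ContDiff ℝ 1 (fun P : ℝ × ℝ => b P.1 P.2))
    (hL : ∀ μ ν : Fin n, ContDiff ℝ 1 (fun P : ℝ × ℝ => L P.1 P.2 μ ν))
    (hN : ∀ μ ν : Fin n, ContDiff ℝ 1 (fun P : ℝ × ℝ => N P.1 P.2 μ ν))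
    (B : (Fin n → ℝ) × ℝ × ℝ → ℝ) (hB : ContDiff ℝ 2 B)
    (z : ℝ × ℝ → Fin n → ℝ) (hz : Differentiable ℝ z) :
    let F : (Fin n → ℝ) → ℝ → ℝ → Fin n → ℝ := fun Z X T => a X T + L X T *ᵥ Z
    let G : (Fin n → ℝ) → ℝ → ℝ → Fin n → ℝ := fun Z X T => b X T + N X T *ᵥ Z
    let M : ℝ → ℝ → Matrix (Fin n) (Fin n) ℝ := fun X T => (L X T)ᵀ - L X T
    let K : ℝ → ℝ → Matrix (Fin n) (Fin n) ℝ := fun X T => (N X T)ᵀ - N X T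
    -- Hessian of `B` in its `z` arguments:
    let hessB : (Fin n → ℝ) × ℝ × ℝ → Matrix (Fin n) (Fin n) ℝ := fun P =>
      Matrix.of fun μ ν => pderZ n (fun Q => pderZ n B ν Q) μ P
    let Lt : ℝ → ℝ → Matrix (Fin n) (Fin n) ℝ := fun X T =>
      Matrix.of fun μ ν => deriv (fun s => L X s μ ν) T
    let Nx : ℝ → ℝ → Matrix (Fin n) (Fin n) ℝ := fun X T =>
      Matrix.of fun μ ν => deriv (fun s => N s T μ ν) X
    ∀ U V : ℝ × ℝ → Fin n → ℝ, Differentiable ℝ U → Differentiable ℝ V →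
      (∀ x t : ℝ,
        M x t *ᵥ (fun μ => deriv (fun s => U (x, s) μ) t)
          + K x t *ᵥ (fun μ => deriv (fun s => U (s, t) μ) x) =
          (hessB (z (x, t), x, t) + Lt x t + Nx x t) *ᵥ U (x, t)) →
      (∀ x t : ℝ,
        M x t *ᵥ (fun μ => deriv (fun s => V (x, s) μ) t)
          + K x t *ᵥ (fun μ => deriv (fun s => V (s, t) μ) x) =
          (hessB (z (x, t), x, t) + Lt x t + Nx x t) *ᵥ V (x, t)) →
      ∀ x t : ℝ,
        deriv (fun s => (M x s *ᵥ U (x, s)) ⬝ᵥ V (x, s)) t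
          + deriv (fun s => (K s t *ᵥ U (s, t)) ⬝ᵥ V (s, t)) x = 0 := by
  intro F G M K hessB Lt Nx U V hU hV hUeq hVeq x t
  have hUc : ∀ i, Differentiable ℝ (fun p : ℝ × ℝ => U p i) := fun i =>
    differentiable_pi.mp hU i
  have hVc : ∀ i, Differentiable ℝ (fun p : ℝ × ℝ => V p i) := fun i =>
    differentiable_pi.mp hV i
  have hxt : Differentiable ℝ (fun s : ℝ => ((x, s) : ℝ × ℝ)) :=
    (differentiable_const x).prodMk differentiable_id
  have htx : Differentiable ℝ (fun s : ℝ => ((s, t) : ℝ × ℝ)) :=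
    differentiable_id.prodMk (differentiable_const t)
  have hUt : ∀ i, HasDerivAt (fun s => U (x, s) i) (deriv (fun s => U (x, s) i) t) t :=
    fun i => (((hUc i).comp hxt) t).hasDerivAt
  have hUx : ∀ i, HasDerivAt (fun s => U (s, t) i) (deriv (fun s => U (s, t) i) x) x :=
    fun i => (((hUc i).comp htx) x).hasDerivAt
  have hVt : ∀ i, HasDerivAt (fun s => V (x, s) i) (deriv (fun s => V (x, s) i) t) t :=
    fun i => (((hVc i).comp hxt) t).hasDerivAt
  have hVx : ∀ i, HasDerivAt (fun s => V (s, t) i) (deriv (fun s => V (s, t) i) x) x :=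
    fun i => (((hVc i).comp htx) x).hasDerivAt
  have hMs : ∀ μ ν, HasDerivAt (fun s => M x s μ ν) (((Lt x t)ᵀ - Lt x t) μ ν) t := by
    intro μ ν
    have h1 : HasDerivAt (fun s => L x s ν μ) (deriv (fun s => L x s ν μ) t) t :=
      ((((hL ν μ).differentiable one_ne_zero).comp hxt) t).hasDerivAt
    have h2 : HasDerivAt (fun s => L x s μ ν) (deriv (fun s => L x s μ ν) t) t :=
      ((((hL μ ν).differentiable one_ne_zero).comp hxt) t).hasDerivAt
    simpa [M, Lt, Matrix.sub_apply, Matrix.transpose_apply] using h1.fun_sub h2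
  have hKs : ∀ μ ν, HasDerivAt (fun s => K s t μ ν) (((Nx x t)ᵀ - Nx x t) μ ν) x := by
    intro μ ν
    have h1 : HasDerivAt (fun s => N s t ν μ) (deriv (fun s => N s t ν μ) x) x :=
      ((((hN ν μ).differentiable one_ne_zero).comp htx) x).hasDerivAt
    have h2 : HasDerivAt (fun s => N s t μ ν) (deriv (fun s => N s t μ ν) x) x :=
      ((((hN μ ν).differentiable one_ne_zero).comp htx) x).hasDerivAt
    simpa [K, Nx, Matrix.sub_apply, Matrix.transpose_apply] using h1.fun_sub h2
  set u := U (x, t)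
  set v := V (x, t)
  set ut := (fun μ => deriv (fun s => U (x, s) μ) t)
  set ux := (fun μ => deriv (fun s => U (s, t) μ) x)
  set vt := (fun μ => deriv (fun s => V (x, s) μ) t)
  set vx := (fun μ => deriv (fun s => V (s, t) μ) x)
  set S := hessB (z (x, t), x, t) + Lt x t + Nx x t with hS
  have hD1 : HasDerivAt (fun s => (M x s *ᵥ U (x, s)) ⬝ᵥ V (x, s))
      ((((Lt x t)ᵀ - Lt x t) *ᵥ u) ⬝ᵥ v + (M x t *ᵥ ut) ⬝ᵥ v + (M x t *ᵥ u) ⬝ᵥ vt) t :=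
    hasDerivAt_quadform hMs hUt hVt
  have hD2 : HasDerivAt (fun s => (K s t *ᵥ U (s, t)) ⬝ᵥ V (s, t))
      ((((Nx x t)ᵀ - Nx x t) *ᵥ u) ⬝ᵥ v + (K x t *ᵥ ux) ⬝ᵥ v + (K x t *ᵥ u) ⬝ᵥ vx) x :=
    hasDerivAt_quadform hKs hUx hVx
  rw [hD1.deriv, hD2.deriv]
  have hMskew : (M x t)ᵀ = -(M x t) := by
    show ((L x t)ᵀ - L x t)ᵀ = -((L x t)ᵀ - L x t)
    rw [Matrix.transpose_sub, Matrix.transpose_transpose, neg_sub]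
  have hKskew : (K x t)ᵀ = -(K x t) := by
    show ((N x t)ᵀ - N x t)ᵀ = -((N x t)ᵀ - N x t)
    rw [Matrix.transpose_sub, Matrix.transpose_transpose, neg_sub]
  have flip : ∀ (A : Matrix (Fin n) (Fin n) ℝ) (p q : Fin n → ℝ),
      (A *ᵥ p) ⬝ᵥ q = (Aᵀ *ᵥ q) ⬝ᵥ p := by
    intro A p q
    rw [dotProduct_comm, Matrix.dotProduct_mulVec, ← Matrix.mulVec_transpose]
  have e1 : (M x t *ᵥ ut) ⬝ᵥ v + (K x t *ᵥ ux) ⬝ᵥ v = (S *ᵥ u) ⬝ᵥ v := by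
    rw [← add_dotProduct, hUeq x t]
  have e2 : (M x t *ᵥ u) ⬝ᵥ vt + (K x t *ᵥ u) ⬝ᵥ vx = -((Sᵀ *ᵥ u) ⬝ᵥ v) := by
    rw [flip (M x t) u vt, flip (K x t) u vx, hMskew, hKskew, Matrix.neg_mulVec,
      Matrix.neg_mulVec, neg_dotProduct, neg_dotProduct, ← neg_add,
      ← add_dotProduct, hVeq x t, flip S v u]
  have hHsymm : (hessB (z (x, t), x, t))ᵀ = hessB (z (x, t), x, t) := by
    ext μ ν
    show hessB (z (x, t), x, t) ν μ = hessB (z (x, t), x, t) μ ν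
    simp only [hessB, Matrix.of_apply]
    exact hess_symm hB (z (x, t), x, t) ν μ
  have hmat : ((Lt x t)ᵀ - Lt x t) + ((Nx x t)ᵀ - Nx x t) + (S - Sᵀ) = 0 := by
    rw [hS, Matrix.transpose_add, Matrix.transpose_add, hHsymm]
    abel
  have hmat' : ((((Lt x t)ᵀ - Lt x t) *ᵥ u) ⬝ᵥ v) + ((((Nx x t)ᵀ - Nx x t) *ᵥ u) ⬝ᵥ v)
      + ((S *ᵥ u) ⬝ᵥ v - (Sᵀ *ᵥ u) ⬝ᵥ v) = 0 := by
    have h0 : (((((Lt x t)ᵀ - Lt x t) + ((Nx x t)ᵀ - Nx x t) + (S - Sᵀ)) *ᵥ u) ⬝ᵥ v) = 0 := by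
      rw [hmat]; simp
    simpa [Matrix.add_mulVec, Matrix.sub_mulVec, add_dotProduct,
      sub_dotProduct] using h0
  linarith [e1, e2, hmat']
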